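/- Let A, M be symmetric with M positive definite, AX = MXΛ and XᵀMX = I_k, and let V' = A'X - M'XΛ. Then the right-hand side of the Sylvester equation, RHS := V' - MX[I∘(XᵀV')], satisfies Xᵀ(RHS)_j = 0 in each column j restricted to indices i with λᵢ = λⱼ, provided (D - I)∘(XᵀV') = 0; i.e., the Sylvester equation AY' - MY'Λ = RHS is solvable column by column. -/

import Mathlib

open Matrix RealInnerProductSpace

lemma symm_range_eq_ker_orth {n : ℕ}
    (T : EuclideanSpace ℝ (Fin n) →ₗ[ℝ] EuclideanSpace ℝ (Fin n))
    (hT : T.IsSymmetric) : LinearMap.range T = (LinearMap.ker T)ᗮ := by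
  have horth : (LinearMap.range T)ᗮ = LinearMap.ker T := by
    ext y
    simp only [Submodule.mem_orthogonal, LinearMap.mem_ker, LinearMap.mem_range]
    constructor
    · intro h
      have h2 : ∀ x : EuclideanSpace ℝ (Fin n), inner ℝ (T y) x = (0 : ℝ) := by
        intro x
        rw [real_inner_comm, ← hT x y]
        exact h (T x) ⟨x, rfl⟩
      have := h2 (T y)
      exact inner_self_eq_zero.mp this
    · rintro h u ⟨x, rfl⟩
      rw [hT x y, h, inner_zero_right]
  rw [← horth, Submodule.orthogonal_orthogonal]

theorem sylvester_rhs_solvable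
    {n k : ℕ} (A M A' M' : Matrix (Fin n) (Fin n) ℝ)
    (hA : A.IsSymm) (hM : M.IsSymm) (hMpd : M.PosDef)
    (hA' : A'.IsSymm) (hM' : M'.IsSymm)
    (X : Matrix (Fin n) (Fin k) ℝ) (lam : Fin k → ℝ)
    (heig : A * X = M * X * diagonal lam)
    (hnorm : Xᵀ * M * X = 1)
    (V' : Matrix (Fin n) (Fin k) ℝ)
    (hV' : V' = A' * X - M' * X * diagonal lam)
    (D : Matrix (Fin k) (Fin k) ℝ)
    (hD : ∀ i j, D i j = if lam i = lam j then 1 else 0)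
    (hcompat : Matrix.hadamard (D - 1) (Xᵀ * V') = 0)
    (hspan : ∀ (j : Fin k) (y : Fin n → ℝ), (A - lam j • M) *ᵥ y = 0 →
      ∃ c : Fin k → ℝ, (∀ i, lam i ≠ lam j → c i = 0) ∧ y = X *ᵥ c) :
    (∀ i j : Fin k, lam i = lam j →
      (Xᵀ * (V' - M * X * Matrix.hadamard 1 (Xᵀ * V'))) i j = 0) ∧
    (∀ j : Fin k, ∃ y : Fin n → ℝ,
      (A - lam j • M) *ᵥ y = fun i => (V' - M * X * Matrix.hadamard 1 (Xᵀ * V')) i j) := by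
  set H := Matrix.hadamard 1 (Xᵀ * V') with hH
  have key : Xᵀ * (V' - M * X * H) = Xᵀ * V' - H := by
    rw [Matrix.mul_sub]
    congr 1
    rw [← Matrix.mul_assoc, ← Matrix.mul_assoc, hnorm, Matrix.one_mul]
  have part1 : ∀ i j : Fin k, lam i = lam j →
      (Xᵀ * (V' - M * X * H)) i j = 0 := by
    intro i j hlam
    rw [key]
    by_cases hij : i = j
    · subst hij
      simp [hH, Matrix.hadamard, Matrix.sub_apply, Matrix.one_apply]
    · have hc := congrFun (congrFun hcompat i) j
      simp only [Matrix.hadamard_apply, Matrix.sub_apply, Matrix.one_apply, hD,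
        Matrix.zero_apply, if_pos hlam, if_neg hij] at hc
      have hz : (Xᵀ * V') i j = 0 := by linarith
      simp [hH, Matrix.sub_apply, Matrix.hadamard_apply, Matrix.one_apply, if_neg hij, hz]
  refine ⟨part1, fun j => ?_⟩
  set B := A - lam j • M with hB
  have hBsymm : B.IsHermitian := by
    have : Bᵀ = B := by
      simp [hB, Matrix.transpose_sub, Matrix.transpose_smul, hA.eq, hM.eq]
    rw [Matrix.IsHermitian, Matrix.conjTranspose_eq_transpose_of_trivial]; exact this
  set T := Matrix.toEuclideanLin B with hT
  have hTsymm : T.IsSymmetric := Matrix.isHermitian_iff_isSymmetric.mp hBsymm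
  set b : EuclideanSpace ℝ (Fin n) :=
    (WithLp.equiv 2 (Fin n → ℝ)).symm (fun i => (V' - M * X * H) i j) with hb
  have hborth : b ∈ (LinearMap.ker T)ᗮ := by
    rw [Submodule.mem_orthogonal]
    intro y hy
    have hy0 : B *ᵥ (WithLp.equiv 2 (Fin n → ℝ) y) = 0 := by
      have : T y = 0 := hy
      have := congrArg (WithLp.equiv 2 (Fin n → ℝ)) this
      simpa [hT, Matrix.ofLp_toEuclideanLin_apply] using this
    obtain ⟨c, hc0, hyc⟩ := hspan j _ hy0
    have hinner : inner ℝ y b = ∑ i, (WithLp.equiv 2 (Fin n → ℝ) y) i * (V' - M * X * H) i j := by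
      simp [hb, PiLp.inner_apply, RCLike.inner_apply, mul_comm]
    rw [hinner, hyc]
    have : ∑ i, (X *ᵥ c) i * (V' - M * X * H) i j
        = ∑ l, c l * (Xᵀ * (V' - M * X * H)) l j := by
      simp only [Matrix.mulVec, Matrix.mul_apply, Matrix.transpose_apply, dotProduct,
        Finset.sum_mul, Finset.mul_sum]
      rw [Finset.sum_comm]
      congr 1; ext i; congr 1; ext l; ring
    rw [this]
    apply Finset.sum_eq_zero
    intro l _
    by_cases hl : lam l = lam j
    · rw [part1 l j hl, mul_zero]
    · rw [hc0 l hl, zero_mul]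
  have hbrange : b ∈ LinearMap.range T := by
    rw [symm_range_eq_ker_orth T hTsymm]
    exact hborth
  obtain ⟨y, hy⟩ := hbrange
  refine ⟨WithLp.equiv 2 (Fin n → ℝ) y, ?_⟩
  have := congrArg (WithLp.equiv 2 (Fin n → ℝ)) hy
  simpa [hT, hb, Matrix.ofLp_toEuclideanLin_apply] using this
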